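/- If there exists a BIBD(n,k,λ) with b blocks and replication number r, then there exists a configuration (k,k) GDD(n,2,2k; λb, r²). -/

import Mathlib

/-- A group divisible design with two groups of size `n` (the points are
`Fin 2 × Fin n`, the first coordinate indicating the group), blocks of size `k`,
each point lying in `rep` blocks, every pair of distinct points in the same
group lying in exactly `l1` blocks, and every pair of points in different
groups lying in exactly `l2` blocks. -/
structure GDD (n k l1 l2 : ℕ) where
  blocks : Multiset (Finset (Fin 2 × Fin n))
  blockCard : ∀ B ∈ blocks, B.card = k
  rep : ℕ
  pointRep : ∀ x : Fin 2 × Fin n,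
    (blocks.filter fun B => x ∈ B).card = rep
  samePairs : ∀ x y : Fin 2 × Fin n, x ≠ y → x.1 = y.1 →
    (blocks.filter fun B => x ∈ B ∧ y ∈ B).card = l1
  crossPairs : ∀ x y : Fin 2 × Fin n, x.1 ≠ y.1 →
    (blocks.filter fun B => x ∈ B ∧ y ∈ B).card = l2

/-- The design has fixed block configuration `(s,t)`: every block meets one
group in exactly `s` points and the other group in exactly `t` points. -/
def GDD.HasConfig {n k l1 l2 : ℕ} (D : GDD n k l1 l2) (s t : ℕ) : Prop :=
  ∀ B ∈ D.blocks,
    ((B.filter fun p => p.1 = 0).card = s ∧ (B.filter fun p => p.1 = 1).card = t) ∨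
    ((B.filter fun p => p.1 = 0).card = t ∧ (B.filter fun p => p.1 = 1).card = s)

/-- A balanced incomplete block design `BIBD(n,k,lam)`: a collection of
`k`-element subsets (blocks) of an `n`-set such that every pair of distinct
points lies in exactly `lam` blocks. -/
structure BIBD (n k lam : ℕ) where
  blocks : Multiset (Finset (Fin n))
  blockCard : ∀ B ∈ blocks, B.card = k
  pairs : ∀ x y : Fin n, x ≠ y →
    (blocks.filter fun B => x ∈ B ∧ y ∈ B).card = lam

open Multiset in
private lemma my_card_filter_bind {α β : Type*} (s : Multiset α) (f : α → Multiset β)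
    (p : β → Prop) [DecidablePred p] :
    ((s.bind f).filter p).card = (s.map fun a => ((f a).filter p).card).sum := by
  induction s using Multiset.induction_on with
  | empty => simp
  | cons a s ih => simp [Multiset.cons_bind, Multiset.filter_add, ih]

open Multiset in
private lemma my_sum_ite {α : Type*} (s : Multiset α) (q : α → Prop) [DecidablePred q] (c : ℕ) :
    (s.map fun a => if q a then c else 0).sum = c * (s.filter q).card := by
  induction s using Multiset.induction_on with
  | empty => simp
  | cons a s ih =>
    by_cases h : q a <;> simp [h, ih, Multiset.filter_cons, Nat.mul_add, Nat.add_comm]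

private lemma my_card_filter_map {α β : Type*} (s : Multiset α) (g : α → β)
    (p : β → Prop) [DecidablePred p] :
    ((s.map g).filter p).card = (s.filter fun a => p (g a)).card := by
  rw [← Multiset.countP_eq_card_filter, Multiset.countP_map]

theorem stmt_10 (n k lam b r : ℕ) (D : BIBD n k lam) (hb : D.blocks.card = b)
    (hr : ∀ x : Fin n, (D.blocks.filter fun B => x ∈ B).card = r) :
    ∃ G : GDD n (2 * k) (lam * b) (r ^ 2), G.HasConfig k k := by
  classical
  set e : Fin 2 → (Fin n ↪ Fin 2 × Fin n) :=
    fun i => ⟨fun x => (i, x), fun a c h => (Prod.ext_iff.mp h).2⟩ with he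
  set blk : Finset (Fin n) → Finset (Fin n) → Finset (Fin 2 × Fin n) :=
    fun B1 B2 => B1.map (e 0) ∪ B2.map (e 1) with hblk
  set G : Multiset (Finset (Fin 2 × Fin n)) :=
    D.blocks.bind (fun B1 => D.blocks.map fun B2 => blk B1 B2) with hG
  have hmem : ∀ (i : Fin 2) (x : Fin n) (B1 B2 : Finset (Fin n)),
      ((i, x) ∈ blk B1 B2) ↔ (i = 0 ∧ x ∈ B1) ∨ (i = 1 ∧ x ∈ B2) := by
    intro i x B1 B2
    simp only [hblk, he, Finset.mem_union, Finset.mem_map, Prod.ext_iff, Function.Embedding.coeFn_mk]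
    constructor
    · rintro (⟨a, ha, h1, h2⟩ | ⟨a, ha, h1, h2⟩)
      · exact Or.inl ⟨h1.symm, h2 ▸ ha⟩
      · exact Or.inr ⟨h1.symm, h2 ▸ ha⟩
    · rintro (⟨rfl, hx⟩ | ⟨rfl, hx⟩)
      · exact Or.inl ⟨x, hx, rfl, rfl⟩
      · exact Or.inr ⟨x, hx, rfl, rfl⟩
  have hcount : ∀ (p : Finset (Fin 2 × Fin n) → Prop) [DecidablePred p],
      (G.filter p).card
        = (D.blocks.map fun B1 => (D.blocks.filter fun B2 => p (blk B1 B2)).card).sum := by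
    intro p _
    rw [hG, my_card_filter_bind]
    congr 1
    apply Multiset.map_congr rfl
    intro B1 _
    exact my_card_filter_map _ _ _
  have hdisj : ∀ B1 B2 : Finset (Fin n), Disjoint (B1.map (e 0)) (B2.map (e 1)) := by
    intro B1 B2
    rw [Finset.disjoint_left]
    rintro ⟨i, x⟩ h1 h2
    simp [he, Finset.mem_map, Prod.ext_iff] at h1 h2
    obtain ⟨a, _, ha, _⟩ := h1
    obtain ⟨c, _, hc, _⟩ := h2
    exact (by decide : ¬ ((0 : Fin 2) = 1)) (ha.trans hc.symm)
  have fin2 : ∀ i : Fin 2, i = 0 ∨ i = 1 := by decide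
  refine ⟨{ blocks := G
            blockCard := ?_
            rep := r * b
            pointRep := ?_
            samePairs := ?_
            crossPairs := ?_ }, ?_⟩
  · intro B hB
    rw [hG] at hB
    obtain ⟨B1, h1, hB⟩ := Multiset.mem_bind.mp hB
    obtain ⟨B2, h2, rfl⟩ := Multiset.mem_map.mp hB
    rw [hblk]
    rw [Finset.card_union_of_disjoint (hdisj B1 B2), Finset.card_map, Finset.card_map,
      D.blockCard B1 h1, D.blockCard B2 h2, two_mul]
  · rintro ⟨i, x⟩
    rcases fin2 i with rfl | rfl
    · rw [hcount]
      have : ∀ B1 B2, ((0 : Fin 2), x) ∈ blk B1 B2 ↔ x ∈ B1 := by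
        intro B1 B2; rw [hmem]; simp
      calc (D.blocks.map fun B1 => (D.blocks.filter fun B2 => ((0:Fin 2), x) ∈ blk B1 B2).card).sum
          = (D.blocks.map fun B1 => if x ∈ B1 then b else 0).sum := by
            apply congrArg; apply Multiset.map_congr rfl; intro B1 _
            by_cases h : x ∈ B1
            · rw [if_pos h, ← hb]
              apply congrArg
              rw [Multiset.filter_eq_self]
              intro B2 _
              exact (this B1 B2).mpr h
            · rw [if_neg h, Multiset.card_eq_zero, Multiset.filter_eq_nil]
              intro B2 _ hc
              exact h ((this B1 B2).mp hc)
        _ = b * r := by rw [my_sum_ite, hr]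
        _ = r * b := Nat.mul_comm _ _
    · rw [hcount]
      calc (D.blocks.map fun B1 => (D.blocks.filter fun B2 => ((1:Fin 2), x) ∈ blk B1 B2).card).sum
          = (D.blocks.map fun _ => r).sum := by
            apply congrArg; apply Multiset.map_congr rfl; intro B1 _
            have : (D.blocks.filter fun B2 => ((1:Fin 2), x) ∈ blk B1 B2)
                = D.blocks.filter fun B2 => x ∈ B2 := by
              apply Multiset.filter_congr; intro B2 _
              rw [hmem]; simp
            rw [this, hr x]
        _ = r * b := by rw [Multiset.map_const', Multiset.sum_replicate, hb, smul_eq_mul, Nat.mul_comm]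
  · rintro ⟨i, x⟩ ⟨j, y⟩ hne hij
    simp only at hij
    subst hij
    have hxy : x ≠ y := fun h => hne (by rw [h])
    rcases fin2 i with rfl | rfl
    · rw [hcount]
      calc (D.blocks.map fun B1 =>
              (D.blocks.filter fun B2 =>
                ((0:Fin 2), x) ∈ blk B1 B2 ∧ ((0:Fin 2), y) ∈ blk B1 B2).card).sum
          = (D.blocks.map fun B1 => if x ∈ B1 ∧ y ∈ B1 then b else 0).sum := by
            apply congrArg; apply Multiset.map_congr rfl; intro B1 _
            by_cases h : x ∈ B1 ∧ y ∈ B1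
            · rw [if_pos h, ← hb]
              apply congrArg
              rw [Multiset.filter_eq_self]
              intro B2 _
              rw [hmem, hmem]
              exact ⟨Or.inl ⟨rfl, h.1⟩, Or.inl ⟨rfl, h.2⟩⟩
            · rw [if_neg h, Multiset.card_eq_zero, Multiset.filter_eq_nil]
              intro B2 _ hc
              rw [hmem, hmem] at hc
              refine h ⟨?_, ?_⟩
              · rcases hc.1 with ⟨_, hx⟩ | ⟨h0, _⟩
                · exact hx
                · exact absurd h0 (by decide)
              · rcases hc.2 with ⟨_, hy⟩ | ⟨h0, _⟩
                · exact hy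
                · exact absurd h0 (by decide)
        _ = b * lam := by rw [my_sum_ite, D.pairs x y hxy]
        _ = lam * b := Nat.mul_comm _ _
    · rw [hcount]
      calc (D.blocks.map fun B1 =>
              (D.blocks.filter fun B2 =>
                ((1:Fin 2), x) ∈ blk B1 B2 ∧ ((1:Fin 2), y) ∈ blk B1 B2).card).sum
          = (D.blocks.map fun _ => lam).sum := by
            apply congrArg; apply Multiset.map_congr rfl; intro B1 _
            have : (D.blocks.filter fun B2 =>
                ((1:Fin 2), x) ∈ blk B1 B2 ∧ ((1:Fin 2), y) ∈ blk B1 B2)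
                = D.blocks.filter fun B2 => x ∈ B2 ∧ y ∈ B2 := by
              apply Multiset.filter_congr; intro B2 _
              rw [hmem, hmem]; simp
            rw [this, D.pairs x y hxy]
        _ = lam * b := by rw [Multiset.map_const', Multiset.sum_replicate, hb, smul_eq_mul, Nat.mul_comm]
  · rintro ⟨i, x⟩ ⟨j, y⟩ hij
    simp only at hij
    have key : ∀ (x y : Fin n),
        (G.filter fun B => ((0:Fin 2), x) ∈ B ∧ ((1:Fin 2), y) ∈ B).card = r ^ 2 := by
      intro x y
      rw [hcount]
      calc (D.blocks.map fun B1 =>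
              (D.blocks.filter fun B2 =>
                ((0:Fin 2), x) ∈ blk B1 B2 ∧ ((1:Fin 2), y) ∈ blk B1 B2).card).sum
          = (D.blocks.map fun B1 => if x ∈ B1 then r else 0).sum := by
            apply congrArg; apply Multiset.map_congr rfl; intro B1 _
            by_cases h : x ∈ B1
            · have : (D.blocks.filter fun B2 =>
                  ((0:Fin 2), x) ∈ blk B1 B2 ∧ ((1:Fin 2), y) ∈ blk B1 B2)
                  = D.blocks.filter fun B2 => y ∈ B2 := by
                apply Multiset.filter_congr; intro B2 _
                rw [hmem, hmem]; simp [h]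
              rw [if_pos h, this, hr y]
            · rw [if_neg h]
              rw [Multiset.card_eq_zero, Multiset.filter_eq_nil]
              intro B2 _ hc
              rw [hmem] at hc
              rcases hc.1 with ⟨_, hx⟩ | ⟨h0, _⟩
              · exact h hx
              · exact absurd h0 (by decide)
        _ = r * r := by rw [my_sum_ite, hr]
        _ = r ^ 2 := (sq r).symm
    rcases fin2 i with rfl | rfl <;> rcases fin2 j with rfl | rfl
    · exact absurd rfl hij
    · exact key x y
    · rw [← key y x]
      exact congrArg Multiset.card (Multiset.filter_congr fun B _ => and_comm)
    · exact absurd rfl hij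
  · intro B hB
    have hB' : B ∈ G := hB
    rw [hG] at hB'
    obtain ⟨B1, h1, hB2⟩ := Multiset.mem_bind.mp hB'
    obtain ⟨B2, h2, rfl⟩ := Multiset.mem_map.mp hB2
    left
    constructor
    · have : (blk B1 B2).filter (fun p => p.1 = 0) = B1.map (e 0) := by
        rw [hblk, Finset.filter_union]
        have h1' : (B1.map (e 0)).filter (fun p => p.1 = 0) = B1.map (e 0) := by
          apply Finset.filter_true_of_mem
          intro p hp
          obtain ⟨a, _, rfl⟩ := Finset.mem_map.mp hp
          rfl
        have h2' : (B2.map (e 1)).filter (fun p => p.1 = 0) = ∅ := by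
          apply Finset.filter_false_of_mem
          intro p hp
          obtain ⟨a, _, rfl⟩ := Finset.mem_map.mp hp
          show ¬ ((1 : Fin 2) = 0); decide
        rw [h1', h2', Finset.union_empty]
      rw [this, Finset.card_map, D.blockCard B1 h1]
    · have : (blk B1 B2).filter (fun p => p.1 = 1) = B2.map (e 1) := by
        rw [hblk, Finset.filter_union]
        have h1' : (B1.map (e 0)).filter (fun p => p.1 = 1) = ∅ := by
          apply Finset.filter_false_of_mem
          intro p hp
          obtain ⟨a, _, rfl⟩ := Finset.mem_map.mp hp
          show ¬ ((0 : Fin 2) = 1); decide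
        have h2' : (B2.map (e 1)).filter (fun p => p.1 = 1) = B2.map (e 1) := by
          apply Finset.filter_true_of_mem
          intro p hp
          obtain ⟨a, _, rfl⟩ := Finset.mem_map.mp hp
          rfl
        rw [h1', h2', Finset.empty_union]
      rw [this, Finset.card_map, D.blockCard B2 h2]
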